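/- Theorem 1 (case λ > λ̄): If λ > λ̄, then the probability that the maximum-distance rule correctly de-anonymizes u from the pair {u′, v} satisfies P(X > Y) ≥ 1 − 2·exp(−(λ − λ̄)²/(4δ²)); equivalently, P(X ≤ Y) ≤ 2·exp(−(λ − λ̄)²/(4δ²)). -/

import Mathlib

open MeasureTheory

open Real ProbabilityTheory

lemma hoeff_core (p : ℝ) (hp0 : 0 ≤ p) (hp1 : p ≤ 1) (u : ℝ) :
    (1 - p) * exp (-(p*u)) + p * exp ((1-p)*u) ≤ exp (u^2/8) := by
  have hpos : ∀ x : ℝ, 0 < 1 - p + p * exp x := by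
    intro x
    rcases eq_or_lt_of_le hp0 with h | h
    · simp [← h]
    · nlinarith [exp_pos x]
  set F : ℝ → ℝ := fun x => x^2/8 + p*x - Real.log (1 - p + p * exp x) with hF
  set F₁ : ℝ → ℝ := fun x => x/4 + p - p * exp x / (1 - p + p * exp x) with hF₁
  have hg : ∀ x : ℝ, HasDerivAt (fun x => 1 - p + p * exp x) (p * exp x) x := by
    intro x
    exact ((Real.hasDerivAt_exp x).const_mul p).const_add (1 - p)
  have hdF : ∀ x : ℝ, HasDerivAt F (F₁ x) x := by
    intro x
    have h1 : HasDerivAt (fun x : ℝ => x^2/8) (x/4) x := by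
      have := (hasDerivAt_pow 2 x).div_const 8
      exact this.congr_deriv (by push_cast; ring)
    have h2 : HasDerivAt (fun x : ℝ => p*x) p x := by
      simpa using (hasDerivAt_id x).const_mul p
    have h3 : HasDerivAt (fun x => Real.log (1 - p + p * exp x))
        (p * exp x / (1 - p + p * exp x)) x := (hg x).log (hpos x).ne'
    exact (h1.add h2).sub h3
  have hdF₁ : ∀ x : ℝ, HasDerivAt F₁
      (1/4 - (p * exp x * (1 - p + p * exp x) - p * exp x * (p * exp x)) /
        (1 - p + p * exp x)^2) x := by
    intro x
    have h1 : HasDerivAt (fun x : ℝ => x/4 + p) (1/4) x := by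
      simpa using (hasDerivAt_id x).div_const 4 |>.add_const p
    have h2 : HasDerivAt (fun x => p * exp x / (1 - p + p * exp x))
        ((p * exp x * (1 - p + p * exp x) - p * exp x * (p * exp x)) /
          (1 - p + p * exp x)^2) x :=
      ((Real.hasDerivAt_exp x).const_mul p).div (hg x) (hpos x).ne'
    exact h1.sub h2
  have hF₂nonneg : ∀ x : ℝ, 0 ≤ 1/4 - (p * exp x * (1 - p + p * exp x) -
      p * exp x * (p * exp x)) / (1 - p + p * exp x)^2 := by
    intro x
    have hgx := hpos x
    rw [sub_nonneg, div_le_iff₀ (by positivity)]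
    nlinarith [sq_nonneg ((1-p) - p * exp x), exp_pos x]
  have hmono₁ : Monotone F₁ :=
    monotone_of_deriv_nonneg (fun x => (hdF₁ x).differentiableAt)
      (fun x => by rw [(hdF₁ x).deriv]; exact hF₂nonneg x)
  have hF₁0 : F₁ 0 = 0 := by
    simp [hF₁, Real.exp_zero]
  have hF0 : F 0 = 0 := by
    simp [hF, Real.exp_zero]
  have hFnonneg : ∀ x : ℝ, 0 ≤ F x := by
    have hdiff : Differentiable ℝ F := fun x => (hdF x).differentiableAt
    intro x
    rcases le_or_gt 0 x with hx | hx
    · have hm : MonotoneOn F (Set.Ici 0) := by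
        apply monotoneOn_of_deriv_nonneg (convex_Ici 0) hdiff.continuous.continuousOn
          (hdiff.differentiableOn)
        intro y hy
        rw [interior_Ici] at hy
        rw [(hdF y).deriv]
        have : F₁ 0 ≤ F₁ y := hmono₁ (le_of_lt hy)
        linarith [hF₁0 ▸ this]
      have := hm (Set.mem_Ici.mpr le_rfl) (Set.mem_Ici.mpr hx) hx
      linarith [hF0 ▸ this]
    · have hm : AntitoneOn F (Set.Iic 0) := by
        apply antitoneOn_of_deriv_nonpos (convex_Iic 0) hdiff.continuous.continuousOn
          (hdiff.differentiableOn)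
        intro y hy
        rw [interior_Iic] at hy
        rw [(hdF y).deriv]
        have : F₁ y ≤ F₁ 0 := hmono₁ (le_of_lt hy)
        linarith [hF₁0 ▸ this]
      have := hm (Set.mem_Iic.mpr hx.le) (Set.mem_Iic.mpr le_rfl) hx.le
      linarith [hF0 ▸ this]
  -- conclude
  have key : -(p*u) + Real.log (1 - p + p * exp u) ≤ u^2/8 := by
    have := hFnonneg u
    simp only [hF] at this
    linarith
  calc (1 - p) * exp (-(p*u)) + p * exp ((1-p)*u)
      = exp (-(p*u)) * (1 - p + p * exp u) := by
        rw [show (1-p)*u = -(p*u) + u by ring, exp_add]; ring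
    _ = exp (-(p*u) + Real.log (1 - p + p * exp u)) := by
        rw [exp_add, Real.exp_log (hpos u)]
    _ ≤ exp (u^2/8) := exp_le_exp.mpr key

lemma integ_icc {Ω : Type*} [MeasurableSpace Ω] (P : Measure Ω) [IsFiniteMeasure P]
    (Z : Ω → ℝ) (hZm : Measurable Z) (a b : ℝ) (hZ : ∀ ω, Z ω ∈ Set.Icc a b) :
    Integrable Z P := by
  apply Integrable.mono' (integrable_const (max |a| |b|)) hZm.aestronglyMeasurable
  filter_upwards with ω
  rw [Real.norm_eq_abs]
  exact abs_le_max_abs_abs (hZ ω).1 (hZ ω).2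

lemma integ_exp_icc {Ω : Type*} [MeasurableSpace Ω] (P : Measure Ω) [IsFiniteMeasure P]
    (Z : Ω → ℝ) (hZm : Measurable Z) (a b : ℝ) (hZ : ∀ ω, Z ω ∈ Set.Icc a b) (s : ℝ) :
    Integrable (fun ω => exp (s * Z ω)) P := by
  apply Integrable.mono' (integrable_const (exp (|s| * max |a| |b|)))
    (hZm.const_mul s).exp.aestronglyMeasurable
  filter_upwards with ω
  rw [Real.norm_eq_abs, abs_of_pos (exp_pos _), exp_le_exp]
  calc s * Z ω ≤ |s * Z ω| := le_abs_self _
    _ = |s| * |Z ω| := abs_mul _ _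
    _ ≤ |s| * max |a| |b| :=
        mul_le_mul_of_nonneg_left (abs_le_max_abs_abs (hZ ω).1 (hZ ω).2) (abs_nonneg s)

lemma mgf_icc_le {Ω : Type*} [MeasurableSpace Ω] (P : Measure Ω) [IsProbabilityMeasure P]
    (Z : Ω → ℝ) (hZm : Measurable Z) (a b : ℝ) (hab : a < b)
    (hZ : ∀ ω, Z ω ∈ Set.Icc a b) (hmean : ∫ ω, Z ω ∂P = 0) (s : ℝ) :
    ∫ ω, exp (s * Z ω) ∂P ≤ exp (s^2*(b-a)^2/8) := by
  have hba : (0:ℝ) < b - a := by linarith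
  have hbane : b - a ≠ 0 := hba.ne'
  have hZint : Integrable Z P := integ_icc P Z hZm a b hZ
  have ha0 : a ≤ 0 := by
    have h := integral_mono (integrable_const a) hZint (fun ω => (hZ ω).1)
    rw [integral_const, probReal_univ] at h
    simpa [hmean] using h
  have hb0 : 0 ≤ b := by
    have h := integral_mono hZint (integrable_const b) (fun ω => (hZ ω).2)
    rw [integral_const, probReal_univ] at h
    simpa [hmean] using h
  set c1 : ℝ := (b * exp (s*a) - a * exp (s*b)) / (b-a) with hc1
  set c2 : ℝ := (exp (s*b) - exp (s*a)) / (b-a) with hc2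
  have hpt : ∀ ω, exp (s * Z ω) ≤ c1 + c2 * Z ω := by
    intro ω
    have h1 := (hZ ω).1
    have h2 := (hZ ω).2
    have hw1 : 0 ≤ (b - Z ω)/(b-a) := div_nonneg (by linarith) hba.le
    have hw2 : 0 ≤ (Z ω - a)/(b-a) := div_nonneg (by linarith) hba.le
    have hsum : (b - Z ω)/(b-a) + (Z ω - a)/(b-a) = 1 := by field_simp; ring
    have key := convexOn_exp.2 (Set.mem_univ (s*a)) (Set.mem_univ (s*b)) hw1 hw2 hsum
    simp only [smul_eq_mul] at key
    have harg : (b - Z ω)/(b-a) * (s*a) + (Z ω - a)/(b-a) * (s*b) = s * Z ω := by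
      field_simp
      ring
    rw [harg] at key
    calc exp (s * Z ω) ≤ (b - Z ω)/(b-a) * exp (s*a) + (Z ω - a)/(b-a) * exp (s*b) := key
      _ = c1 + c2 * Z ω := by rw [hc1, hc2]; field_simp; ring
  have hint : ∫ ω, exp (s * Z ω) ∂P ≤ ∫ ω, (c1 + c2 * Z ω) ∂P :=
    integral_mono (integ_exp_icc P Z hZm a b hZ s)
      ((integrable_const c1).add (hZint.const_mul c2)) hpt
  rw [integral_add (integrable_const c1) (hZint.const_mul c2), integral_const, probReal_univ,
    integral_const_mul, hmean, mul_zero, add_zero, one_smul] at hint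
  refine hint.trans ?_
  set p : ℝ := -a/(b-a) with hp
  set u : ℝ := s*(b-a) with hu
  have hp0 : 0 ≤ p := div_nonneg (by linarith) hba.le
  have hp1 : p ≤ 1 := by rw [hp, div_le_one hba]; linarith
  have hcore := hoeff_core p hp0 hp1 u
  have e1 : -(p*u) = s*a := by rw [hp, hu]; field_simp
  have e2 : (1-p)*u = s*b := by rw [hp, hu]; field_simp; ring
  rw [e1, e2] at hcore
  have ec : c1 = (1-p) * exp (s*a) + p * exp (s*b) := by
    rw [hc1, hp]; field_simp; ring
  have eu : u^2/8 = s^2*(b-a)^2/8 := by rw [hu]; ring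
  rw [ec, ← eu]
  exact hcore

lemma tail_ge_aux {Ω : Type*} [MeasurableSpace Ω] (P : Measure Ω) [IsProbabilityMeasure P]
    (Z : Ω → ℝ) (hZm : Measurable Z) (a b m t : ℝ) (hab : a < b)
    (hZ : ∀ ω, Z ω ∈ Set.Icc a b) (hmean : ∫ ω, Z ω ∂P = m) (ht : 0 < t) :
    (P {ω | m + t ≤ Z ω}).toReal ≤ exp (-2*t^2/(b-a)^2) := by
  have hba : (0:ℝ) < b - a := by linarith
  set s : ℝ := 4*t/(b-a)^2 with hs
  have hs0 : 0 ≤ s := by positivity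
  set W : Ω → ℝ := fun ω => Z ω - m with hW
  have hWm : Measurable W := hZm.sub measurable_const
  have hWr : ∀ ω, W ω ∈ Set.Icc (a - m) (b - m) := fun ω =>
    ⟨by simp [hW]; linarith [(hZ ω).1], by simp [hW]; linarith [(hZ ω).2]⟩
  have hWmean : ∫ ω, W ω ∂P = 0 := by
    rw [hW]
    rw [integral_sub (integ_icc P Z hZm a b hZ) (integrable_const m), hmean,
      integral_const, probReal_univ, one_smul, sub_self]
  have hWint : Integrable (fun ω => exp (s * W ω)) P :=
    integ_exp_icc P W hWm (a-m) (b-m) hWr s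
  have hch := measure_ge_le_exp_mul_mgf (X := W) (μ := P) t hs0 hWint
  have hset : {ω | t ≤ W ω} = {ω | m + t ≤ Z ω} := by
    ext ω; simp [hW]; constructor <;> intro h <;> linarith
  rw [hset] at hch
  refine hch.trans ?_
  have hmgf : mgf W P s ≤ exp (s^2*((b-m)-(a-m))^2/8) :=
    mgf_icc_le P W hWm (a-m) (b-m) (by linarith) hWr hWmean s
  calc exp (-s*t) * mgf W P s ≤ exp (-s*t) * exp (s^2*((b-m)-(a-m))^2/8) := by
        exact mul_le_mul_of_nonneg_left hmgf (exp_pos _).le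
    _ = exp (-s*t + s^2*((b-m)-(a-m))^2/8) := (exp_add _ _).symm
    _ = exp (-2*t^2/(b-a)^2) := by
        congr 1
        have : (b-m)-(a-m) = b - a := by ring
        rw [this, hs]
        field_simp
        ring

lemma tail_le_aux {Ω : Type*} [MeasurableSpace Ω] (P : Measure Ω) [IsProbabilityMeasure P]
    (Z : Ω → ℝ) (hZm : Measurable Z) (a b m t : ℝ) (hab : a < b)
    (hZ : ∀ ω, Z ω ∈ Set.Icc a b) (hmean : ∫ ω, Z ω ∂P = m) (ht : 0 < t) :
    (P {ω | Z ω ≤ m - t}).toReal ≤ exp (-2*t^2/(b-a)^2) := by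
  have h := tail_ge_aux P (fun ω => -Z ω) hZm.neg (-b) (-a) (-m) t (by linarith)
    (fun ω => ⟨by simpa using (hZ ω).2, by simpa using (hZ ω).1⟩)
    (by rw [integral_neg, hmean]) ht
  have hset : {ω | -m + t ≤ -Z ω} = {ω | Z ω ≤ m - t} := by
    ext ω; simp; constructor <;> intro hh <;> linarith
  rw [hset] at h
  refine h.trans ?_
  have : -a - -b = b - a := by ring
  rw [this]

/-- Theorem 1 (case λ > λ̄): the maximum-distance rule correctly de-anonymizes
`u` from `{u′, v}` with probability at least `1 - 2 exp(-(λ - λ̄)²/(4δ²))`;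
equivalently `P(X ≤ Y) ≤ 2 exp(-(λ - λ̄)²/(4δ²))`. -/
theorem theorem1_case_gt
    {Ω : Type*} [MeasurableSpace Ω] (P : Measure Ω) [IsProbabilityMeasure P]
    (X Y : Ω → ℝ) (hXm : Measurable X) (hYm : Measurable Y)
    (θl θu θbl θbu lam lamb θ θb δ : ℝ)
    (hXr : ∀ ω, X ω ∈ Set.Icc θl θu)
    (hYr : ∀ ω, Y ω ∈ Set.Icc θbl θbu)
    (hlam : lam = ∫ ω, X ω ∂P)
    (hlamb : lamb = ∫ ω, Y ω ∂P)
    (hθ : θ = θu - θl) (hθb : θb = θbu - θbl) (hδ : δ = max θ θb)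
    (hθpos : 0 < θ) (hθbpos : 0 < θb)
    (hgt : lamb < lam) :
    1 - 2 * Real.exp (-(lam - lamb) ^ 2 / (4 * δ ^ 2)) ≤
        (P {ω | Y ω < X ω}).toReal ∧
      (P {ω | X ω ≤ Y ω}).toReal ≤
        2 * Real.exp (-(lam - lamb) ^ 2 / (4 * δ ^ 2)) := by
  have hδθ : θ ≤ δ := hδ ▸ le_max_left θ θb
  have hδθb : θb ≤ δ := hδ ▸ le_max_right θ θb
  have hδpos : 0 < δ := lt_of_lt_of_le hθpos hδθ
  set t : ℝ := (lam - lamb)/2 with htdef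
  have ht : 0 < t := by rw [htdef]; linarith
  -- X side
  have hXr' : ∀ ω, X ω ∈ Set.Icc θl (θl + δ) :=
    fun ω => ⟨(hXr ω).1, le_trans (hXr ω).2 (by linarith)⟩
  have hA : (P {ω | X ω ≤ lam - t}).toReal ≤ exp (-2*t^2/δ^2) := by
    have h := tail_le_aux P X hXm θl (θl + δ) lam t (by linarith) hXr' hlam.symm ht
    simpa using h
  -- Y side
  have hYr' : ∀ ω, Y ω ∈ Set.Icc θbl (θbl + δ) :=
    fun ω => ⟨(hYr ω).1, le_trans (hYr ω).2 (by linarith)⟩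
  have hB : (P {ω | lamb + t ≤ Y ω}).toReal ≤ exp (-2*t^2/δ^2) := by
    have h := tail_ge_aux P Y hYm θbl (θbl + δ) lamb t (by linarith) hYr' hlamb.symm ht
    simpa using h
  -- union bound
  have hsub : {ω | X ω ≤ Y ω} ⊆ {ω | X ω ≤ lam - t} ∪ {ω | lamb + t ≤ Y ω} := by
    intro ω (hω : X ω ≤ Y ω)
    rcases le_or_gt (X ω) (lam - t) with h | h
    · exact Or.inl h
    · refine Or.inr ?_
      have : lam - t = lamb + t := by rw [htdef]; ring
      simp only [Set.mem_setOf_eq]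
      linarith
  have hmeas : P {ω | X ω ≤ Y ω} ≤
      P {ω | X ω ≤ lam - t} + P {ω | lamb + t ≤ Y ω} :=
    (measure_mono hsub).trans (measure_union_le _ _)
  have hto : (P {ω | X ω ≤ Y ω}).toReal ≤
      (P {ω | X ω ≤ lam - t}).toReal + (P {ω | lamb + t ≤ Y ω}).toReal := by
    have h1 := ENNReal.toReal_mono
      (ENNReal.add_ne_top.mpr ⟨measure_ne_top _ _, measure_ne_top _ _⟩) hmeas
    rwa [ENNReal.toReal_add (measure_ne_top _ _) (measure_ne_top _ _)] at h1
  have hexp : exp (-2*t^2/δ^2) ≤ exp (-(lam - lamb)^2/(4*δ^2)) := by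
    rw [exp_le_exp]
    have : (lam - lamb)^2 = 4*t^2 := by rw [htdef]; ring
    rw [this]
    rw [div_le_div_iff₀ (by positivity) (by positivity)]
    nlinarith [sq_nonneg t, sq_nonneg δ, mul_pos (mul_pos ht ht) (mul_pos hδpos hδpos)]
  have hsecond : (P {ω | X ω ≤ Y ω}).toReal ≤
      2 * Real.exp (-(lam - lamb) ^ 2 / (4 * δ ^ 2)) := by
    calc (P {ω | X ω ≤ Y ω}).toReal
        ≤ (P {ω | X ω ≤ lam - t}).toReal + (P {ω | lamb + t ≤ Y ω}).toReal := hto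
      _ ≤ exp (-2*t^2/δ^2) + exp (-2*t^2/δ^2) := add_le_add hA hB
      _ = 2 * exp (-2*t^2/δ^2) := by ring
      _ ≤ 2 * Real.exp (-(lam - lamb) ^ 2 / (4 * δ ^ 2)) := by linarith [hexp]
  refine ⟨?_, hsecond⟩
  have hs : MeasurableSet {ω | X ω ≤ Y ω} := measurableSet_le hXm hYm
  have hcompl : {ω | Y ω < X ω} = {ω | X ω ≤ Y ω}ᶜ := by
    ext ω; simp [not_le]
  have hadd := measure_add_measure_compl (μ := P) hs
  rw [measure_univ] at hadd
  have hadd' : (P {ω | X ω ≤ Y ω}).toReal + (P {ω | X ω ≤ Y ω}ᶜ).toReal = 1 := by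
    rw [← ENNReal.toReal_add (measure_ne_top _ _) (measure_ne_top _ _), hadd, ENNReal.toReal_one]
  rw [hcompl]
  linarith
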